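/- Data processing inequality for marginals (relative smoothness of the Sinkhorn objective): for probability measures π̃, π on X × Y with p_X π̃ ≪ p_X π ≪ μ★, the functional F(π) = KL(p_X π | μ★) satisfies D_F(π̃|π) = KL(p_X π̃ | p_X π) ≥ 0 (so F is convex), and KL(p_X π̃ | p_X π) ≤ KL(π̃ | π) (so F is 1-smooth relative to the negative entropy). -/

import Mathlib

open MeasureTheory ProbabilityTheory Real
open scoped ENNReal

section aux

variable {α : Type*} [MeasurableSpace α]

/-- Chain rule for log-likelihood ratios. -/
lemma llr_chain_aux (κ ν μ : Measure α) [SigmaFinite κ] [SigmaFinite ν] [SigmaFinite μ]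
    (h1 : κ ≪ ν) (h2 : ν ≪ μ) :
    llr κ μ =ᵐ[κ] fun x => llr κ ν x + llr ν μ x := by
  filter_upwards [(h1.trans h2).ae_le (Measure.rnDeriv_mul_rnDeriv h1),
    Measure.rnDeriv_pos h1, h1.ae_le (Measure.rnDeriv_pos h2),
    h1.ae_le (Measure.rnDeriv_lt_top κ ν), (h1.trans h2).ae_le (Measure.rnDeriv_lt_top ν μ)]
    with x hx hpos1 hpos2 hlt1 hlt2
  rw [llr, llr, llr, ← hx, Pi.mul_apply, ENNReal.toReal_mul, Real.log_mul]
  · exact ENNReal.toReal_ne_zero.mpr ⟨hpos1.ne', hlt1.ne⟩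
  · exact ENNReal.toReal_ne_zero.mpr ⟨hpos2.ne', hlt2.ne⟩

/-- Jensen's inequality trick : if `∫ exp (-f) ≤ 1` then `0 ≤ ∫ f`. -/
lemma nonneg_of_integral_exp_neg_le_one (ν : Measure α) [IsProbabilityMeasure ν]
    {f : α → ℝ} (hf : Integrable f ν) (hexp : Integrable (fun x => Real.exp (-f x)) ν)
    (hle : ∫ x, Real.exp (-f x) ∂ν ≤ 1) : 0 ≤ ∫ x, f x ∂ν := by
  have hJ := convexOn_exp.map_integral_le continuous_exp.continuousOn isClosed_univ
    (Filter.Eventually.of_forall fun x => Set.mem_univ (-f x)) hf.neg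
    (by simpa [Function.comp_def] using hexp)
  rw [integral_neg] at hJ
  have : Real.exp (-∫ x, f x ∂ν) ≤ 1 := hJ.trans hle
  rw [Real.exp_le_one_iff] at this
  linarith

/-- Gibbs' inequality. -/
lemma integral_llr_nonneg_aux (ν μ : Measure α) [IsProbabilityMeasure ν] [IsProbabilityMeasure μ]
    (h : ν ≪ μ) (hint : Integrable (llr ν μ) ν) : 0 ≤ ∫ x, llr ν μ x ∂ν := by
  have hae : (fun x => Real.exp (- llr ν μ x)) =ᵐ[ν] fun x => (μ.rnDeriv ν x).toReal :=
    exp_neg_llr h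
  have hlint : ∫⁻ x, μ.rnDeriv ν x ∂ν ≠ ⊤ :=
    (Measure.lintegral_rnDeriv_le.trans_lt (measure_lt_top μ _)).ne
  have hi : Integrable (fun x => (μ.rnDeriv ν x).toReal) ν :=
    integrable_toReal_of_lintegral_ne_top (Measure.measurable_rnDeriv μ ν).aemeasurable hlint
  refine nonneg_of_integral_exp_neg_le_one ν hint (hi.congr hae.symm) ?_
  rw [integral_congr_ae hae]
  rw [integral_toReal (Measure.measurable_rnDeriv μ ν).aemeasurable
    (Measure.rnDeriv_lt_top μ ν)]
  calc (∫⁻ x, μ.rnDeriv ν x ∂ν).toReal ≤ (μ Set.univ).toReal :=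
        ENNReal.toReal_mono (measure_ne_top μ _) Measure.lintegral_rnDeriv_le
    _ = 1 := by simp

end aux

/- The Kullback--Leibler divergence. -/
open Classical in
noncomputable def klDiv {α : Type*} [MeasurableSpace α] (μ ν : Measure α) : EReal :=
  if μ ≪ ν ∧ Integrable (llr μ ν) μ then ((∫ x, llr μ ν x ∂μ : ℝ) : EReal) else ⊤

/-- Data processing inequality for first marginals; relative smoothness of the
Sinkhorn objective: for probability measures `pt, p` on `X × Y` with
`p_X pt ≪ p_X p ≪ μs`, the objective `F(π) = KL(p_X π | μs)` (with first variation
`log(d p_X π / d μs)` at `p`) satisfies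
`D_F(pt|p) = F(pt) − F(p) − ∫ log(d p_X p/d μs) d(p_X pt − p_X p) = KL(p_X pt | p_X p) ≥ 0`
(so `F` is convex) and `KL(p_X pt | p_X p) ≤ KL(pt | p)` (so `F` is 1-smooth relative to the
negative entropy). -/
theorem sinkhorn_objective_relative_smoothness
    {X Y : Type*} [MeasurableSpace X] [MeasurableSpace Y]
    (μs : Measure X) [IsProbabilityMeasure μs]
    (p pt : Measure (X × Y)) [IsProbabilityMeasure p] [IsProbabilityMeasure pt]
    (h1 : pt.fst ≪ p.fst) (h2 : p.fst ≪ μs)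
    (hint1 : Integrable (llr p.fst μs) p.fst)
    (hint2 : Integrable (llr pt.fst μs) pt.fst)
    (hint3 : Integrable (llr p.fst μs) pt.fst) :
    klDiv pt.fst μs - klDiv p.fst μs
        - (((∫ x, llr p.fst μs x ∂pt.fst) - (∫ x, llr p.fst μs x ∂p.fst) : ℝ) : EReal)
      = klDiv pt.fst p.fst ∧
    (0 : EReal) ≤ klDiv pt.fst p.fst ∧
    klDiv pt.fst p.fst ≤ klDiv pt p := by
  classical
  have hchain := llr_chain_aux pt.fst p.fst μs h1 h2
  -- integrability of llr pt.fst p.fst w.r.t. pt.fst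
  have hintB : Integrable (llr pt.fst p.fst) pt.fst := by
    refine (hint2.sub hint3).congr ?_
    filter_upwards [hchain] with x hx
    simp only [Pi.sub_apply]
    rw [hx]; ring
  -- value of the integral decomposition
  have hsum : ∫ x, llr pt.fst μs x ∂pt.fst
      = ∫ x, llr pt.fst p.fst x ∂pt.fst + ∫ x, llr p.fst μs x ∂pt.fst := by
    rw [← integral_add hintB hint3]
    exact integral_congr_ae hchain
  have hkl1 : klDiv pt.fst μs = ((∫ x, llr pt.fst μs x ∂pt.fst : ℝ) : EReal) := by
    rw [klDiv, if_pos ⟨h1.trans h2, hint2⟩]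
  have hkl2 : klDiv p.fst μs = ((∫ x, llr p.fst μs x ∂p.fst : ℝ) : EReal) := by
    rw [klDiv, if_pos ⟨h2, hint1⟩]
  have hkl3 : klDiv pt.fst p.fst = ((∫ x, llr pt.fst p.fst x ∂pt.fst : ℝ) : EReal) := by
    rw [klDiv, if_pos ⟨h1, hintB⟩]
  refine ⟨?_, ?_, ?_⟩
  · rw [hkl1, hkl2, hkl3, ← EReal.coe_sub, ← EReal.coe_sub, EReal.coe_eq_coe_iff]
    rw [hsum]; ring
  · rw [hkl3]
    exact_mod_cast integral_llr_nonneg_aux pt.fst p.fst h1 hintB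
  · by_cases hc : pt ≪ p ∧ Integrable (llr pt p) pt
    · obtain ⟨hac, hint⟩ := hc
      rw [hkl3, klDiv, if_pos ⟨hac, hint⟩]
      -- data processing inequality
      have hfst : pt.fst = pt.map Prod.fst := rfl
      have hmeas : StronglyMeasurable (llr pt.fst p.fst) := stronglyMeasurable_llr _ _
      have hintB' : Integrable (fun z : X × Y => llr pt.fst p.fst z.1) pt := by
        rw [hfst] at hintB
        exact (integrable_map_measure hmeas.aestronglyMeasurable
          measurable_fst.aemeasurable).mp hintB
      have hmap : ∫ x, llr pt.fst p.fst x ∂pt.fst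
          = ∫ z : X × Y, llr pt.fst p.fst z.1 ∂pt :=
        integral_map measurable_fst.aemeasurable hmeas.aestronglyMeasurable
      set g := pt.fst.rnDeriv p.fst with hg
      -- exp of negative difference
      have hexp1 : (fun z : X × Y => Real.exp (llr pt.fst p.fst z.1))
          =ᵐ[pt] fun z => (g z.1).toReal := by
        have h := exp_llr_of_ac pt.fst p.fst h1
        rw [hfst] at h
        have hs : MeasurableSet {x : X | Real.exp (llr pt.fst p.fst x) = (g x).toReal} := by
          apply measurableSet_eq_fun
          · exact (measurable_llr _ _).exp
          · exact (Measure.measurable_rnDeriv _ _).ennreal_toReal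
        exact (ae_map_iff measurable_fst.aemeasurable hs).mp h
      have hexp2 : (fun z : X × Y => Real.exp (- llr pt p z))
          =ᵐ[pt] fun z => (p.rnDeriv pt z).toReal := exp_neg_llr hac
      have hexpEq : (fun z : X × Y =>
            Real.exp (-(llr pt p z - llr pt.fst p.fst z.1)))
          =ᵐ[pt] fun z => ((g z.1) * p.rnDeriv pt z).toReal := by
        filter_upwards [hexp1, hexp2] with z h1' h2'
        rw [ENNReal.toReal_mul, ← h1', ← h2', ← Real.exp_add]
        ring_nf
      -- the lintegral bound
      have hprod_meas : Measurable fun z : X × Y => g z.1 * p.rnDeriv pt z :=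
        ((Measure.measurable_rnDeriv _ _).comp measurable_fst).mul
          (Measure.measurable_rnDeriv _ _)
      have hlint : ∫⁻ z : X × Y, g z.1 * p.rnDeriv pt z ∂pt ≤ 1 := by
        have step1 : ∫⁻ z : X × Y, g z.1 ∂(pt.withDensity (p.rnDeriv pt))
            = ∫⁻ z : X × Y, g z.1 * p.rnDeriv pt z ∂pt := by
          rw [lintegral_withDensity_eq_lintegral_mul _ (Measure.measurable_rnDeriv _ _)
            (show Measurable fun z : X × Y => g z.1 from
              (Measure.measurable_rnDeriv _ _).comp measurable_fst)]
          refine lintegral_congr fun z => ?_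
          simp [mul_comm]
        have step2 : ∫⁻ z : X × Y, g z.1 ∂(pt.withDensity (p.rnDeriv pt))
            ≤ ∫⁻ z : X × Y, g z.1 ∂p :=
          lintegral_mono' (Measure.withDensity_rnDeriv_le p pt) le_rfl
        have step3 : ∫⁻ z : X × Y, g z.1 ∂p = ∫⁻ x, g x ∂p.fst :=
          (lintegral_map (Measure.measurable_rnDeriv _ _) measurable_fst).symm
        have step4 : ∫⁻ x, g x ∂p.fst = pt.fst Set.univ := Measure.lintegral_rnDeriv h1
        calc ∫⁻ z : X × Y, g z.1 * p.rnDeriv pt z ∂pt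
            = ∫⁻ z : X × Y, g z.1 ∂(pt.withDensity (p.rnDeriv pt)) := step1.symm
          _ ≤ ∫⁻ x, g x ∂p.fst := step2.trans_eq step3
          _ = 1 := by rw [step4]; simp
      have hprodInt : Integrable (fun z : X × Y => ((g z.1) * p.rnDeriv pt z).toReal) pt :=
        integrable_toReal_of_lintegral_ne_top hprod_meas.aemeasurable
          (hlint.trans_lt ENNReal.one_lt_top).ne
      have hIle : ∫ z : X × Y, ((g z.1) * p.rnDeriv pt z).toReal ∂pt ≤ 1 := by
        rw [integral_toReal hprod_meas.aemeasurable
          (ae_lt_top hprod_meas (hlint.trans_lt ENNReal.one_lt_top).ne)]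
        calc (∫⁻ z : X × Y, g z.1 * p.rnDeriv pt z ∂pt).toReal
            ≤ (1 : ℝ≥0∞).toReal := ENNReal.toReal_mono ENNReal.one_ne_top hlint
          _ = 1 := by simp
      have key : 0 ≤ ∫ z : X × Y, (llr pt p z - llr pt.fst p.fst z.1) ∂pt := by
        refine nonneg_of_integral_exp_neg_le_one pt (hint.sub hintB')
          ((hprodInt.congr hexpEq.symm)) ?_
        rw [integral_congr_ae hexpEq]
        exact hIle
      rw [integral_sub hint hintB'] at key
      rw [← hmap] at key
      exact_mod_cast le_of_sub_nonneg key
    · have htop : klDiv pt p = ⊤ := by rw [klDiv]; exact if_neg hc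
      rw [htop]; exact le_top
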